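/- The map F : ℝ³ → ℝ³ defined by F(τ, v, u) = (e^{τ sin v} cos(τ cos v), e^{τ sin v} sin(τ cos v) cos u, e^{τ sin v} sin(τ cos v) sin u) is differentiable, and the absolute value of the determinant of its Jacobian matrix at (τ, v, u) equals e^{3 τ sin v} · |τ · sin(τ cos v)|. -/

import Mathlib

open Real

/-- The geodesic polar coordinate map of `S² × ℝ` around `(1,0,0)` in the Euclidean
model: `F(τ, v, u)` with radial parameter `τ`, altitude `v` and longitude `u`. -/
noncomputable def Fpolar (p : Fin 3 → ℝ) : Fin 3 → ℝ :=
  ![Real.exp (p 0 * Real.sin (p 1)) * Real.cos (p 0 * Real.cos (p 1)),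
    Real.exp (p 0 * Real.sin (p 1)) * Real.sin (p 0 * Real.cos (p 1)) * Real.cos (p 2),
    Real.exp (p 0 * Real.sin (p 1)) * Real.sin (p 0 * Real.cos (p 1)) * Real.sin (p 2)]

open ContinuousLinearMap in
/-- The Jacobian of `Fpolar` as a continuous linear map. -/
noncomputable def Dpolar (τ v u : ℝ) : (Fin 3 → ℝ) →L[ℝ] (Fin 3 → ℝ) :=
  ContinuousLinearMap.pi
    ![(Real.exp (τ * sin v) * (sin v * cos (τ * cos v) - cos v * sin (τ * cos v))) • proj 0 +
        (Real.exp (τ * sin v) * τ * (cos v * cos (τ * cos v) + sin v * sin (τ * cos v))) • proj 1,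
      (Real.exp (τ * sin v) * (sin v * sin (τ * cos v) + cos v * cos (τ * cos v)) * cos u) • proj 0 +
        (Real.exp (τ * sin v) * τ * (cos v * sin (τ * cos v) - sin v * cos (τ * cos v)) * cos u) • proj 1 +
        (-(Real.exp (τ * sin v) * sin (τ * cos v) * sin u)) • proj 2,
      (Real.exp (τ * sin v) * (sin v * sin (τ * cos v) + cos v * cos (τ * cos v)) * sin u) • proj 0 +
        (Real.exp (τ * sin v) * τ * (cos v * sin (τ * cos v) - sin v * cos (τ * cos v)) * sin u) • proj 1 +
        (Real.exp (τ * sin v) * sin (τ * cos v) * cos u) • proj 2]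

theorem hasFDerivAt_Fpolar (p : Fin 3 → ℝ) :
    HasFDerivAt Fpolar (Dpolar (p 0) (p 1) (p 2)) p := by
  have h0 := hasFDerivAt_apply (𝕜 := ℝ) (F' := fun _ : Fin 3 => ℝ) (0 : Fin 3) p
  have h1 := hasFDerivAt_apply (𝕜 := ℝ) (F' := fun _ : Fin 3 => ℝ) (1 : Fin 3) p
  have h2 := hasFDerivAt_apply (𝕜 := ℝ) (F' := fun _ : Fin 3 => ℝ) (2 : Fin 3) p
  have hA := h0.mul ((Real.hasDerivAt_sin (p 1)).comp_hasFDerivAt p h1)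
  have hB := h0.mul ((Real.hasDerivAt_cos (p 1)).comp_hasFDerivAt p h1)
  have hE := (Real.hasDerivAt_exp (p 0 * Real.sin (p 1))).comp_hasFDerivAt p hA
  have hS := (Real.hasDerivAt_sin (p 0 * Real.cos (p 1))).comp_hasFDerivAt p hB
  have hC := (Real.hasDerivAt_cos (p 0 * Real.cos (p 1))).comp_hasFDerivAt p hB
  have hcu := (Real.hasDerivAt_cos (p 2)).comp_hasFDerivAt p h2
  have hsu := (Real.hasDerivAt_sin (p 2)).comp_hasFDerivAt p h2
  have hf0 := hE.mul hC
  have hf1 := (hE.mul hS).mul hcu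
  have hf2 := (hE.mul hS).mul hsu
  apply hasFDerivAt_pi'.2
  intro i
  fin_cases i
  · simp only [Fpolar, Matrix.cons_val_zero]
    convert hf0 using 1
    · rfl
    · rfl
    refine ContinuousLinearMap.ext fun x => ?_
    simp [Dpolar, Function.comp]
    ring
  · simp only [Fpolar, Matrix.cons_val_one, Matrix.head_cons]
    convert hf1 using 1
    · rfl
    · rfl
    refine ContinuousLinearMap.ext fun x => ?_
    simp [Dpolar, Function.comp]
    ring
  · simp only [Fpolar]
    convert hf2 using 1
    · rfl
    · rfl
    refine ContinuousLinearMap.ext fun x => ?_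
    simp [Dpolar, Function.comp]
    ring

/-- The geodesic polar coordinate map `F` is differentiable and the absolute value of
its Jacobian determinant at `(τ, v, u)` is `e^{3 τ sin v} · |τ · sin(τ cos v)|`
(the key step in the volume formula of Theorem 2.4). -/
theorem jacobian_polar :
    Differentiable ℝ Fpolar ∧
    ∀ τ v u : ℝ, |(fderiv ℝ Fpolar ![τ, v, u]).det| =
      Real.exp (3 * (τ * Real.sin v)) * |τ * Real.sin (τ * Real.cos v)| := by
  constructor
  · exact fun p => (hasFDerivAt_Fpolar p).differentiableAt
  · intro τ v u
    have h := (hasFDerivAt_Fpolar ![τ, v, u]).fderiv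
    simp only [Matrix.cons_val_zero, Matrix.cons_val_one, Matrix.head_cons,
      Matrix.cons_val_two, Matrix.tail_cons] at h
    rw [h]
    have hdet : (Dpolar τ v u).det =
        -(Real.exp (τ * Real.sin v) ^ 3 * (τ * Real.sin (τ * Real.cos v))) := by
      rw [show (Dpolar τ v u).det
          = Matrix.det (LinearMap.toMatrix' ((Dpolar τ v u) : (Fin 3 → ℝ) →ₗ[ℝ] (Fin 3 → ℝ)))
          from (LinearMap.det_toMatrix' _).symm]
      rw [Matrix.det_fin_three]
      simp [LinearMap.toMatrix'_apply, Dpolar]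
      linear_combination
        (-(Real.exp (τ * Real.sin v) ^ 3 * τ * Real.sin (τ * Real.cos v)) *
            ((Real.sin v ^ 2 + Real.cos v ^ 2) *
              (Real.sin (τ * Real.cos v) ^ 2 + Real.cos (τ * Real.cos v) ^ 2))) *
          (Real.sin_sq_add_cos_sq u) +
        (-(Real.exp (τ * Real.sin v) ^ 3 * τ * Real.sin (τ * Real.cos v)) *
            (Real.sin (τ * Real.cos v) ^ 2 + Real.cos (τ * Real.cos v) ^ 2)) *
          (Real.sin_sq_add_cos_sq v) +
        (-(Real.exp (τ * Real.sin v) ^ 3 * τ * Real.sin (τ * Real.cos v))) *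
          (Real.sin_sq_add_cos_sq (τ * Real.cos v))
    rw [hdet, abs_neg, abs_mul, abs_pow, abs_of_pos (Real.exp_pos _)]
    rw [← Real.exp_nat_mul]
    norm_num
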